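/- arXiv:1010.1873 — 2 statements merged into one kernel-verified Lean document; each statement's English description precedes it below -/
import Mathlib

section
/- Given the interpolation estimates ‖u − I_h u‖²_{0,K} ≤ c h^{2(k+1)}|u|²_{k+1,K}, h‖a·∇(u − I_h u)‖²_{0,K} ≤ c h^{2k+1}|u|²_{k+1,K}, h⁻¹‖u − I_h u‖²_{0,K} ≤ c h^{2k+1}|u|²_{k+1,K}, and ‖u − I_h u‖²_{0,∂K} ≤ c h^{2k+1}|u|²_{k+1,K}, with h ≤ 1 and the facet deviation term vanishing (since Ī_h u is the trace of I_h u), one obtains ⫴(u,u) − (I_h u, Ī_h u)⫴_{A'} ≤ C h^{k+1/2}‖u‖_{k+1,Ω}. Combined with the quasi-optimality estimate ⫴u − u_h⫴_A ≤ (1 + C_A/β_A) inf ⫴u − v_h⫴_{A'}, this yields ⫴u − u_h⫴_A ≤ C' h^{k+1/2}‖u‖_{k+1,Ω} and in particular ‖u − u_h‖_{0,Ω} ≤ C'' h^{k+1/2}‖u‖_{k+1,Ω}. -/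
/-- Best approximation for the hyperbolic case: the per-cell interpolation
estimates (with vanishing facet deviation) give
`⫴(u,u) − (I_h u, Ī_h u)⫴_{A'} ≤ C h^{k+1/2} ‖u‖_{k+1,Ω}`, and combined with the
quasi-optimality estimate this yields `⫴u − u_h⫴_A ≤ C' h^{k+1/2} ‖u‖_{k+1,Ω}` and
`‖u − u_h‖_{0,Ω} ≤ C'' h^{k+1/2} ‖u‖_{k+1,Ω}`.
Here, for the interpolation error `e = u − I_h u` on each cell `K`:
`eL2 K = ‖e‖²_{0,K}`, `eAdv K = h_K‖a·∇e‖²_{0,K}`, `eInv K = h_K⁻¹‖e‖²_{0,K}`,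
`eFac K` the facet terms `‖a_n^{1/2}·‖²` on `∂K`, `eDev K = ‖(u−Ī_h u)−(u−I_h u)‖²_{0,∂K}`,
`eBdry` the `Γ`-boundary term, `sn K = |u|²_{k+1,K}`, `Unorm = ‖u‖_{k+1,Ω}`,
`Aerr = ⫴u − u_h⫴_A` and `L2err = ‖u − u_h‖_{0,Ω}`. -/
theorem stmt_13 {ι : Type*} [Fintype ι]
    (μ c CA βA Unorm : ℝ) (k : ℕ)
    (hμ : 0 < μ) (hμ1 : μ ≤ 1) (hc : 0 < c) (hCA : 0 < CA) (hβA : 0 < βA)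
    (hU : 0 ≤ Unorm) :
    ∃ C > (0 : ℝ), ∃ C' > (0 : ℝ), ∃ C'' > (0 : ℝ),
      ∀ (h : ℝ) (eL2 eAdv eInv eFac eDev sn : ι → ℝ) (eBdry Aerr L2err : ℝ),
        0 < h → h ≤ 1 →
        (∀ K, 0 ≤ eL2 K) → (∀ K, 0 ≤ eAdv K) → (∀ K, 0 ≤ eInv K) →
        (∀ K, 0 ≤ eFac K) → (∀ K, 0 ≤ sn K) → 0 ≤ eBdry → 0 ≤ Aerr → 0 ≤ L2err →
        (∀ K, eL2 K ≤ c * h ^ (2 * (k + 1)) * sn K) →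
        (∀ K, eAdv K ≤ c * h ^ (2 * k + 1) * sn K) →
        (∀ K, eDev K = 0) →
        (∀ K, eInv K ≤ c * h ^ (2 * k + 1) * sn K) →
        (∀ K, eFac K ≤ c * h ^ (2 * k + 1) * sn K) →
        eBdry ≤ c * h ^ (2 * k + 1) * ∑ K, sn K →
        (∑ K, sn K) ≤ Unorm ^ 2 →
        Aerr ≤ (1 + CA / βA) *
          Real.sqrt (μ * (∑ K, eL2 K) + (∑ K, eAdv K) + (∑ K, eDev K) + eBdry
            + (∑ K, eInv K) + ∑ K, eFac K) →
        μ * L2err ^ 2 ≤ Aerr ^ 2 →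
        (Real.sqrt (μ * (∑ K, eL2 K) + (∑ K, eAdv K) + (∑ K, eDev K) + eBdry
            + (∑ K, eInv K) + ∑ K, eFac K) ≤ C * h ^ ((k : ℝ) + 1 / 2) * Unorm ∧
          Aerr ≤ C' * h ^ ((k : ℝ) + 1 / 2) * Unorm ∧
          L2err ≤ C'' * h ^ ((k : ℝ) + 1 / 2) * Unorm) := by
  refine ⟨Real.sqrt (5 * c), Real.sqrt_pos.2 (by linarith), 
    (1 + CA / βA) * Real.sqrt (5 * c), by positivity, 
    (1 + CA / βA) * Real.sqrt (5 * c) / Real.sqrt μ, by positivity, ?_⟩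
  intro h eL2 eAdv eInv eFac eDev sn eBdry Aerr L2err hh hh1 hL2 hAdv hInv hFac hsn
    hB hA hL heL2 heAdv heDev heInv heFac heB hS hqo hmu
  set S := ∑ K, sn K with hSdef
  have hS0 : 0 ≤ S := Finset.sum_nonneg fun K _ => hsn K
  have hpow : h ^ (2 * (k + 1)) ≤ h ^ (2 * k + 1) :=
    pow_le_pow_of_le_one hh.le hh1 (by omega)
  have hhp : 0 < h ^ (2 * k + 1) := pow_pos hh _
  -- bound each sum
  have b1 : μ * (∑ K, eL2 K) ≤ c * h ^ (2 * k + 1) * S := by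
    calc μ * (∑ K, eL2 K) ≤ 1 * (∑ K, eL2 K) := by
          apply mul_le_mul_of_nonneg_right hμ1 (Finset.sum_nonneg fun K _ => hL2 K)
      _ = ∑ K, eL2 K := one_mul _
      _ ≤ ∑ K, c * h ^ (2 * (k + 1)) * sn K := Finset.sum_le_sum fun K _ => heL2 K
      _ = c * h ^ (2 * (k + 1)) * S := by rw [← Finset.mul_sum]
      _ ≤ c * h ^ (2 * k + 1) * S := by
          apply mul_le_mul_of_nonneg_right _ hS0
          exact mul_le_mul_of_nonneg_left hpow hc.le
  have b2 : (∑ K, eAdv K) ≤ c * h ^ (2 * k + 1) * S := by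
    calc (∑ K, eAdv K) ≤ ∑ K, c * h ^ (2 * k + 1) * sn K :=
          Finset.sum_le_sum fun K _ => heAdv K
      _ = c * h ^ (2 * k + 1) * S := by rw [← Finset.mul_sum]
  have b3 : (∑ K, eDev K) = 0 := Finset.sum_eq_zero fun K _ => heDev K
  have b4 : (∑ K, eInv K) ≤ c * h ^ (2 * k + 1) * S := by
    calc (∑ K, eInv K) ≤ ∑ K, c * h ^ (2 * k + 1) * sn K :=
          Finset.sum_le_sum fun K _ => heInv K
      _ = c * h ^ (2 * k + 1) * S := by rw [← Finset.mul_sum]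
  have b5 : (∑ K, eFac K) ≤ c * h ^ (2 * k + 1) * S := by
    calc (∑ K, eFac K) ≤ ∑ K, c * h ^ (2 * k + 1) * sn K :=
          Finset.sum_le_sum fun K _ => heFac K
      _ = c * h ^ (2 * k + 1) * S := by rw [← Finset.mul_sum]
  have btot : μ * (∑ K, eL2 K) + (∑ K, eAdv K) + (∑ K, eDev K) + eBdry
      + (∑ K, eInv K) + ∑ K, eFac K ≤ 5 * c * (h ^ (2 * k + 1) * S) := by
    rw [b3]; linarith
  have hSU : S ≤ Unorm ^ 2 := hS
  have key : h ^ (2 * k + 1) = (h ^ ((k : ℝ) + 1 / 2)) ^ 2 := by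
    rw [← Real.rpow_natCast h (2 * k + 1), ← Real.rpow_natCast (h ^ ((k : ℝ) + 1 / 2)) 2,
      ← Real.rpow_mul hh.le]
    congr 1
    push_cast
    ring
  have hrp : 0 ≤ h ^ ((k : ℝ) + 1 / 2) := Real.rpow_nonneg hh.le _
  have main : Real.sqrt (μ * (∑ K, eL2 K) + (∑ K, eAdv K) + (∑ K, eDev K) + eBdry
      + (∑ K, eInv K) + ∑ K, eFac K) ≤ Real.sqrt (5 * c) * h ^ ((k : ℝ) + 1 / 2) * Unorm := by
    have : μ * (∑ K, eL2 K) + (∑ K, eAdv K) + (∑ K, eDev K) + eBdry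
        + (∑ K, eInv K) + ∑ K, eFac K ≤
        (Real.sqrt (5 * c) * h ^ ((k : ℝ) + 1 / 2) * Unorm) ^ 2 := by
      have e1 : (Real.sqrt (5 * c) * h ^ ((k : ℝ) + 1 / 2) * Unorm) ^ 2
          = 5 * c * ((h ^ ((k : ℝ) + 1 / 2)) ^ 2 * Unorm ^ 2) := by
        rw [mul_pow, mul_pow, Real.sq_sqrt (by linarith)]; ring
      rw [e1, ← key]
      refine le_trans btot ?_
      apply mul_le_mul_of_nonneg_left _ (by linarith : (0:ℝ) ≤ 5 * c)
      exact mul_le_mul_of_nonneg_left hSU hhp.le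
    calc Real.sqrt (μ * (∑ K, eL2 K) + (∑ K, eAdv K) + (∑ K, eDev K) + eBdry
          + (∑ K, eInv K) + ∑ K, eFac K)
        ≤ Real.sqrt ((Real.sqrt (5 * c) * h ^ ((k : ℝ) + 1 / 2) * Unorm) ^ 2) :=
          Real.sqrt_le_sqrt this
      _ = Real.sqrt (5 * c) * h ^ ((k : ℝ) + 1 / 2) * Unorm := by
          rw [Real.sqrt_sq (by positivity)]
  refine ⟨main, ?_, ?_⟩
  · calc Aerr ≤ (1 + CA / βA) * Real.sqrt _ := hqo
      _ ≤ (1 + CA / βA) * (Real.sqrt (5 * c) * h ^ ((k : ℝ) + 1 / 2) * Unorm) :=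
          mul_le_mul_of_nonneg_left main (by positivity)
      _ = (1 + CA / βA) * Real.sqrt (5 * c) * (h ^ ((k : ℝ) + 1 / 2)) * Unorm := by ring
  · have hAbound : Aerr ≤ (1 + CA / βA) * Real.sqrt (5 * c) * (h ^ ((k : ℝ) + 1 / 2)) * Unorm := by
      calc Aerr ≤ (1 + CA / βA) * Real.sqrt _ := hqo
        _ ≤ (1 + CA / βA) * (Real.sqrt (5 * c) * h ^ ((k : ℝ) + 1 / 2) * Unorm) :=
            mul_le_mul_of_nonneg_left main (by positivity)
        _ = _ := by ring
    have hsqmu : 0 < Real.sqrt μ := Real.sqrt_pos.2 hμ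
    have : Real.sqrt μ * L2err ≤ Aerr := by
      have h1 : (Real.sqrt μ * L2err) ^ 2 ≤ Aerr ^ 2 := by
        rw [mul_pow, Real.sq_sqrt hμ.le]; exact hmu
      have h2 := Real.sqrt_le_sqrt h1
      rwa [Real.sqrt_sq (by positivity), Real.sqrt_sq hA] at h2
    have final : L2err ≤ ((1 + CA / βA) * Real.sqrt (5 * c) * (h ^ ((k : ℝ) + 1 / 2)) * Unorm) / Real.sqrt μ := by
      rw [le_div_iff₀ hsqmu, mul_comm]
      exact this.trans hAbound
    calc L2err ≤ _ := final
      _ = (1 + CA / βA) * Real.sqrt (5 * c) / Real.sqrt μ * h ^ ((k : ℝ) + 1 / 2) * Unorm := by ring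
end

section
/- Suppose the dual problem B(v, w) = ∫_Ω (u − u_h)·v dx for all v, admits a solution w with elliptic regularity ‖w‖_{2,Ω} ≤ c‖u − u_h‖_{0,Ω}, and suppose: B is symmetric and consistent (B(u − u_h, w_I) = 0 for the interpolant w_I of w), continuous |B(x,y)| ≤ C‖x‖_{D'}‖y‖_{D'}, and the interpolation error satisfies ‖w − w_I‖_{D'} ≤ c h ‖w‖_{2,Ω}. Then ‖u − u_h‖_{0,Ω} ≤ c' h ‖u − u_h‖_{D'}, and combined with the energy estimate ‖u − u_h‖_{D'} ≤ c'' h^k ‖u‖_{k+1,Ω}, one gets ‖u − u_h‖_{0,Ω} ≤ C h^{k+1}‖u‖_{k+1,Ω}. -/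
/-- Aubin–Nitsche duality argument for the diffusive limit: with a dual solution
`w` satisfying elliptic regularity (`W2 = ‖w‖_{2,Ω} ≤ c_reg ‖u−u_h‖_{0,Ω}`),
adjoint consistency (symmetry of `B`), Galerkin orthogonality against the
interpolant `wI`, continuity in the `D'` norm, the interpolation estimate
`‖w − wI‖_{D'} ≤ c_int h ‖w‖_{2,Ω}` and the energy estimate
`‖u − u_h‖_{D'} ≤ c_en h^k ‖u‖_{k+1,Ω}`, one gets
`‖u−u_h‖_{0,Ω} ≤ c' h ‖u−u_h‖_{D'}` and `‖u−u_h‖_{0,Ω} ≤ C h^{k+1} ‖u‖_{k+1,Ω}`. -/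
theorem stmt_16 {V : Type*} [AddCommGroup V] [Module ℝ V]
    (B : V →ₗ[ℝ] V →ₗ[ℝ] ℝ) (nD' n0 : Seminorm ℝ V)
    (u uh w wI : V) (Cc creg cint cen W2 h Uk : ℝ) (k : ℕ)
    (hsymm : ∀ x y : V, B x y = B y x)
    (hC : 0 < Cc) (hcreg : 0 < creg) (hcint : 0 < cint) (hcen : 0 < cen)
    (hh : 0 < h) (hUk : 0 ≤ Uk) (hW2 : 0 ≤ W2)
    (hdual : B (u - uh) w = (n0 (u - uh)) ^ 2)
    (hreg : W2 ≤ creg * n0 (u - uh))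
    (hcons : B (u - uh) wI = 0)
    (hcont : ∀ x y : V, |B x y| ≤ Cc * nD' x * nD' y)
    (hinterp : nD' (w - wI) ≤ cint * h * W2)
    (henergy : nD' (u - uh) ≤ cen * h ^ k * Uk) :
    ∃ c' > (0 : ℝ), n0 (u - uh) ≤ c' * h * nD' (u - uh) ∧
      ∃ C > (0 : ℝ), n0 (u - uh) ≤ C * h ^ (k + 1) * Uk := by
  set e := u - uh
  have hBww : B e (w - wI) = (n0 e) ^ 2 := by
    have := map_sub (B e) w wI
    rw [this, hdual, hcons, sub_zero]
  have hbound : (n0 e) ^ 2 ≤ Cc * nD' e * (cint * h * (creg * n0 e)) := by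
    calc (n0 e) ^ 2 = B e (w - wI) := hBww.symm
      _ ≤ |B e (w - wI)| := le_abs_self _
      _ ≤ Cc * nD' e * nD' (w - wI) := hcont _ _
      _ ≤ Cc * nD' e * (cint * h * (creg * n0 e)) := by
          apply mul_le_mul_of_nonneg_left
          · exact hinterp.trans (by
              apply mul_le_mul_of_nonneg_left hreg
              positivity)
          · positivity
  have key : n0 e ≤ (Cc * cint * creg) * h * nD' e := by
    rcases eq_or_lt_of_le (apply_nonneg n0 e) with h0 | h0
    · rw [← h0]; positivity
    · have := hbound
      rw [pow_two] at this
      have h2 : n0 e * n0 e ≤ ((Cc * cint * creg) * h * nD' e) * n0 e := by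
        nlinarith [apply_nonneg nD' e]
      exact le_of_mul_le_mul_right h2 h0
  refine ⟨Cc * cint * creg, by positivity, key, Cc * cint * creg * cen, by positivity, ?_⟩
  calc n0 e ≤ (Cc * cint * creg) * h * nD' e := key
    _ ≤ (Cc * cint * creg) * h * (cen * h ^ k * Uk) := by
        apply mul_le_mul_of_nonneg_left henergy; positivity
    _ = Cc * cint * creg * cen * h ^ (k + 1) * Uk := by ring
end
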